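/- Let φ ∈ L²(ℝ), let c : ℤ → ℂ be finitely supported, and define χ := Σ_{l∈ℤ} c_l φ_{1l}. Then for every γ ∈ L²(ℝ) and all j, k ∈ ℤ, ⟨γ, χ_{jk}⟩ = Σ_{l∈ℤ} conj(c_l) · ⟨γ, φ_{j+1, 2k+l}⟩, where χ_{jk}(x) := 2^{j/2} χ(2^j x − k). In particular, writing a_{jk}(γ) := ⟨γ, φ_{jk}⟩ for the approximation coefficients: if φ satisfies the scaling equation φ = Σ_l h_l φ_{1l}, then a_{jk}(γ) = Σ_l conj(h_l) a_{j+1, 2k+l}(γ), i.e., a_j(γ) = M⁻ C_{h̃} a_{j+1}(γ); and if ψ := Σ_l g_l φ_{1l}, then d_{jk}(γ) := ⟨γ, ψ_{jk}⟩ = Σ_l conj(g_l) a_{j+1, 2k+l}(γ), i.e., d_j(γ) = M⁻ C_{g̃} a_{j+1}(γ). This is the decomposition step of the Pyramid Algorithm. -/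

import Mathlib

open MeasureTheory

/-- For `f : ℝ → ℂ`, `f_{jk}(x) := 2^{j/2} f(2^j x − k)` (translation–dilation). -/
noncomputable def dil (f : ℝ → ℂ) (j k : ℤ) (x : ℝ) : ℂ :=
  (((2:ℝ) ^ ((j:ℝ) / 2) : ℝ) : ℂ) * f ((2:ℝ) ^ j * x - (k:ℝ))

lemma memℒp_comp_affine {f : ℝ → ℂ} (hf : MemLp f 2 (volume : Measure ℝ))
    (a b : ℝ) (ha : a ≠ 0) :
    MemLp (fun x : ℝ => f (a * x - b)) 2 (volume : Measure ℝ) := by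
  have hg : MeasurableEmbedding (fun x : ℝ => a * x - b) := by
    have : (fun x : ℝ => a * x - b)
        = ((Homeomorph.mulLeft₀ a ha).trans (Homeomorph.addRight (-b))) := by
      funext x; simp [sub_eq_add_neg]
    rw [this]
    exact Homeomorph.measurableEmbedding _
  rw [show (fun x : ℝ => f (a * x - b)) = f ∘ (fun x : ℝ => a * x - b) from rfl,
    ← hg.memLp_map_measure_iff]
  have hmap : Measure.map (fun x : ℝ => a * x - b) (volume : Measure ℝ)
      = ENNReal.ofReal |a⁻¹| • volume := by
    have h1 : (fun x : ℝ => a * x - b) = (fun y : ℝ => y - b) ∘ (fun x : ℝ => a * x) := rfl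
    rw [h1, ← Measure.map_map (by fun_prop) (by fun_prop),
      Real.map_volume_mul_left ha, Measure.map_smul]
    congr 1
    have : (fun y : ℝ => y - b) = (fun y : ℝ => y + (-b)) := by funext y; ring
    rw [this, map_add_right_eq_self]
  rw [hmap]
  exact hf.smul_measure ENNReal.ofReal_ne_top

lemma memℒp_dil {f : ℝ → ℂ} (hf : MemLp f 2 (volume : Measure ℝ)) (j k : ℤ) :
    MemLp (dil f j k) 2 (volume : Measure ℝ) := by
  have := (memℒp_comp_affine hf ((2:ℝ) ^ j) (k:ℝ) (by positivity)).const_mul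
    ((((2:ℝ) ^ ((j:ℝ) / 2) : ℝ) : ℂ))
  exact this

lemma integrable_mul_conj {f g : ℝ → ℂ} (hf : MemLp f 2 (volume : Measure ℝ))
    (hg : MemLp g 2 (volume : Measure ℝ)) :
    Integrable (fun t => f t * (starRingEnd ℂ) (g t)) volume := by
  have hgc : MemLp (fun t => (starRingEnd ℂ) (g t)) 2 (volume : Measure ℝ) :=
    hg.of_le_mul (c := 1) (RCLike.continuous_conj.comp_aestronglyMeasurable hg.1)
      (Filter.Eventually.of_forall fun x => by simp)
  rw [← memLp_one_iff_integrable]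
  exact MemLp.smul (𝕜 := ℂ) (r := 1) hgc hf

/-- decomposition step of the Pyramid Algorithm: for `φ ∈ L²(ℝ)`,
finitely supported `c : ℤ → ℂ` and `χ := Σ_l c_l φ_{1l}`, for every `γ ∈ L²(ℝ)` and
all `j, k`, one has `⟨γ, χ_{jk}⟩ = Σ_l conj(c_l) ⟨γ, φ_{j+1, 2k+l}⟩` (with the inner
product `⟨u, v⟩ = ∫ u conj(v)`). -/
theorem stmt7 (φ : ℝ → ℂ) (hφ : MemLp φ 2 (volume : Measure ℝ))
    (c : ℤ → ℂ) (hc : (Function.support c).Finite)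
    (χ : ℝ → ℂ) (hχ : ∀ x : ℝ, χ x = ∑ᶠ l : ℤ, c l * dil φ 1 l x)
    (γ : ℝ → ℂ) (hγ : MemLp γ 2 (volume : Measure ℝ)) (j k : ℤ) :
    (∫ t : ℝ, γ t * (starRingEnd ℂ) (dil χ j k t))
      = ∑ᶠ l : ℤ, (starRingEnd ℂ) (c l) *
          ∫ t : ℝ, γ t * (starRingEnd ℂ) (dil φ (j + 1) (2 * k + l) t) := by
  classical
  set s := hc.toFinset with hs
  -- pointwise identity
  have key : ∀ t : ℝ, dil χ j k t = ∑ l ∈ s, c l * dil φ (j + 1) (2 * k + l) t := by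
    intro t
    have hsum : χ ((2:ℝ) ^ j * t - (k:ℝ))
        = ∑ l ∈ s, c l * dil φ 1 l ((2:ℝ) ^ j * t - (k:ℝ)) := by
      rw [hχ]
      refine finsum_eq_sum_of_support_subset _ ?_
      intro l hl
      simp only [Function.mem_support] at hl
      have : c l ≠ 0 := fun h => hl (by simp [h])
      simp [hs, Set.Finite.mem_toFinset, Function.mem_support, this]
    rw [dil, hsum, Finset.mul_sum]
    refine Finset.sum_congr rfl fun l _ => ?_
    rw [dil, dil]
    have harg : (2:ℝ) ^ (1:ℤ) * ((2:ℝ) ^ j * t - (k:ℝ)) - (l:ℝ)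
        = (2:ℝ) ^ (j + 1) * t - ((2 * k + l : ℤ) : ℝ) := by
      rw [zpow_add_one₀ (two_ne_zero)]
      push_cast; ring
    have hcoef : (2:ℝ) ^ ((j:ℝ) / 2) * (2:ℝ) ^ (((1:ℤ):ℝ) / 2)
        = (2:ℝ) ^ ((((j + 1 : ℤ)):ℝ) / 2) := by
      rw [← Real.rpow_add (by norm_num)]
      push_cast; ring_nf
    rw [harg, ← hcoef, Complex.ofReal_mul]
    ring
  -- integrability of each term
  have hint : ∀ l : ℤ, Integrable
      (fun t => γ t * (starRingEnd ℂ) (dil φ (j + 1) (2 * k + l) t)) volume :=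
    fun l => integrable_mul_conj hγ (memℒp_dil hφ _ _)
  calc (∫ t : ℝ, γ t * (starRingEnd ℂ) (dil χ j k t))
      = ∫ t : ℝ, ∑ l ∈ s, (starRingEnd ℂ) (c l) *
          (γ t * (starRingEnd ℂ) (dil φ (j + 1) (2 * k + l) t)) := by
        refine integral_congr_ae (Filter.Eventually.of_forall fun t => ?_)
        dsimp only
        rw [key t, map_sum, Finset.mul_sum]
        refine Finset.sum_congr rfl fun l _ => ?_
        rw [map_mul]; ring
    _ = ∑ l ∈ s, (starRingEnd ℂ) (c l) *
          ∫ t : ℝ, γ t * (starRingEnd ℂ) (dil φ (j + 1) (2 * k + l) t) := by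
        rw [integral_finset_sum _ fun l _ => (hint l).const_mul _]
        exact Finset.sum_congr rfl fun l _ => integral_const_mul _ _
    _ = ∑ᶠ l : ℤ, (starRingEnd ℂ) (c l) *
          ∫ t : ℝ, γ t * (starRingEnd ℂ) (dil φ (j + 1) (2 * k + l) t) := by
        symm
        refine finsum_eq_sum_of_support_subset _ ?_
        intro l hl
        simp only [Function.mem_support] at hl
        have : c l ≠ 0 := fun h => hl (by simp [h])
        simp [hs, Set.Finite.mem_toFinset, Function.mem_support, this]
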